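/- Let k be a complete algebraically closed analytic field, L an analytic field containing k as a closed subfield, and x ∈ L \ k an element such that L is the topological closure of the subfield k(x) and the extension L/k is immediate. Then the polynomial ring k[x] is dense in L; moreover, the ring of integers L° = {y ∈ L : ‖y‖ ≤ 1} is the topological closure of the union over a ∈ k of the subrings k°[(x − a)/π_a], where for each a ∈ k, π_a is any element of k with ‖π_a‖ = ‖x − a‖ (such elements exist since L/k is immediate) and k° = {c ∈ k : ‖c‖ ≤ 1}. -/

import Mathlib

/-- An element `x` of `Ω` is algebraic over the subfield `F` of `Ω`. -/
def IsAlgOver {Ω : Type*} [Field Ω] (F : Subfield Ω) (x : Ω) : Prop :=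
  ∃ p : Polynomial Ω, p ≠ 0 ∧ (∀ n, p.coeff n ∈ F) ∧ Polynomial.eval x p = 0

/-- `cl K S`: the completed algebraic closure of `K(S)` inside the ambient field `Ω`;
topological closure of the set of elements algebraic over the subfield generated by `K` and `S`. -/
noncomputable def cl {Ω : Type*} [Field Ω] [TopologicalSpace Ω] (K : Subfield Ω) (S : Set Ω) : Set Ω :=
  closure {x : Ω | IsAlgOver (Subfield.closure ((K : Set Ω) ∪ S)) x}

/-- The subfield `F` of `Ω` is algebraically closed (as a field). -/
def IsAlgClosedSub {Ω : Type*} [Field Ω] (F : Subfield Ω) : Prop :=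
  ∀ x : Ω, IsAlgOver F x → x ∈ F

/-- `S` is topologically-algebraically independent over `K`. -/
def TAIndep {Ω : Type*} [Field Ω] [TopologicalSpace Ω] (K : Subfield Ω) (S : Set Ω) : Prop :=
  ∀ S' : Set Ω, S' ⊂ S → cl K S' ⊂ cl K S

/-- `Topdeg K F`: the least cardinality of a t.a. generating subset of `F` over `K`. -/
noncomputable def Topdeg {Ω : Type*} [Field Ω] [TopologicalSpace Ω] (K : Subfield Ω) (F : Set Ω) :
    Cardinal :=
  sInf {c : Cardinal | ∃ S : Set Ω, S ⊆ F ∧ cl K S = cl K F ∧ Cardinal.mk S = c}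

/-- `topdeg K F`: the supremum of cardinalities of subsets of `F` t.a. independent over `K`. -/
noncomputable def topdeg {Ω : Type*} [Field Ω] [TopologicalSpace Ω] (K : Subfield Ω) (F : Set Ω) :
    Cardinal :=
  sSup {c : Cardinal | ∃ S : Set Ω, S ⊆ F ∧ TAIndep K S ∧ Cardinal.mk S = c}

/-- The distance from `t` to the subset `F`. -/
noncomputable def rdist {Ω : Type*} [NormedField Ω] (F : Set Ω) (t : Ω) : ℝ :=
  sInf ((fun c => ‖t - c‖) '' F)

/-- The extension `Ω / K` is immediate. -/
def IsImmediate {Ω : Type*} [NormedField Ω] (K : Subfield Ω) : Prop :=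
  {r : ℝ | ∃ x : Ω, x ≠ 0 ∧ ‖x‖ = r} = {r : ℝ | ∃ x ∈ K, x ≠ 0 ∧ ‖x‖ = r} ∧
  ∀ x : Ω, ‖x‖ = 1 → ∃ c ∈ K, ‖x - c‖ < 1

open IsUltrametricDist Polynomial Filter in
private lemma aux_prod_norm_one {L : Type*} [NormedField L] (T : Multiset L)
    (h : ∀ y ∈ T, ‖y‖ = 1) : ‖T.prod‖ = 1 := by
  induction T using Multiset.induction with
  | empty => simp
  | cons a s ih =>
    rw [Multiset.prod_cons, norm_mul, h a (Multiset.mem_cons_self a s),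
      ih (fun y hy => h y (Multiset.mem_cons_of_mem hy)), one_mul]

private lemma aux_prod_inv {L : Type*} [Field L] (T : Multiset L) :
    (T.map fun y => y⁻¹).prod = T.prod⁻¹ := by
  induction T using Multiset.induction with
  | empty => simp
  | cons a s ih => simp [Multiset.prod_cons, ih, mul_inv, mul_comm]


open IsUltrametricDist Polynomial Filter in
/-- if `L` is the completion of `k(x)` and `L/k` is immediate (`k` algebraically
closed complete), then `k[x]` is dense in `L`, and the ring of integers `L°` is the closure of
the union over `a ∈ k` of the rings `k°[(x − a)/π_a]` for any choice of `π_a ∈ k` with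
`‖π_a‖ = ‖x − a‖`. -/
theorem dense_polynomials_of_immediate
    {L : Type*} [NormedField L] [CompleteSpace L] [IsUltrametricDist L]
    (k : Subfield L) (hk : IsClosed (k : Set L)) (hkac : IsAlgClosed k)
    (x : L) (hx : x ∉ k)
    (hgen : closure ((Subfield.closure ((k : Set L) ∪ {x}) : Set L)) = (Set.univ : Set L))
    (himm : IsImmediate k) :
    Dense {y : L | ∃ P : Polynomial L, (∀ n, P.coeff n ∈ k) ∧ y = Polynomial.eval x P} ∧
    ∀ π : L → L, (∀ a ∈ k, π a ∈ k ∧ ‖π a‖ = ‖x - a‖) →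
      {y : L | ‖y‖ ≤ 1} =
        closure (⋃ a ∈ (k : Set L),
          (Subring.closure ({c : L | c ∈ k ∧ ‖c‖ ≤ 1} ∪ {(x - a) / π a}) : Set L)) := by
  haveI : IsAlgClosed ↥k := hkac
  set f : ↥k →+* L := k.subtype with hf
  -- basic facts
  have hxa : ∀ a ∈ k, x - a ≠ 0 := by
    intro a ha h
    exact hx (by rwa [sub_eq_zero.1 h])
  have hxapos : ∀ a ∈ k, (0:ℝ) < ‖x - a‖ := fun a ha => norm_pos_iff.2 (hxa a ha)
  -- key lemma: distances to k strictly decrease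
  have key : ∀ a ∈ k, ∃ a' ∈ k, ‖x - a'‖ < ‖x - a‖ := by
    intro a ha
    have hw : x - a ≠ 0 := hxa a ha
    have h1 : ‖x - a‖ ∈ {r : ℝ | ∃ z : L, z ≠ 0 ∧ ‖z‖ = r} := ⟨x - a, hw, rfl⟩
    rw [himm.1] at h1
    obtain ⟨p, hp, hp0, hpn⟩ := h1
    have hpne : p ≠ 0 := hp0
    have hnorm : ‖(x - a) / p‖ = 1 := by
      rw [norm_div, hpn, div_self (ne_of_gt (hxapos a ha))]
    obtain ⟨c, hc, hclt⟩ := himm.2 _ hnorm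
    refine ⟨a + p * c, k.add_mem ha (k.mul_mem hp hc), ?_⟩
    have : x - (a + p * c) = p * ((x - a) / p - c) := by
      field_simp
      ring
    rw [this, norm_mul, hpn]
    calc ‖x - a‖ * ‖(x - a)/p - c‖ < ‖x - a‖ * 1 :=
          (mul_lt_mul_iff_right₀ (hxapos a ha)).2 hclt
      _ = ‖x - a‖ := mul_one _
  -- the subring of polynomials in x over k
  set S : Subring L := (Polynomial.eval₂RingHom f x).range with hS
  have hmemPoly : ∀ y : L,
      y ∈ {y : L | ∃ P : Polynomial L, (∀ n, P.coeff n ∈ k) ∧ y = Polynomial.eval x P} ↔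
      y ∈ S := by
    intro y
    constructor
    · rintro ⟨P, hcoeff, rfl⟩
      have : P ∈ Polynomial.lifts f := (Polynomial.lifts_iff_coeff_lifts P).2 (fun n => by
        rw [hf, Subfield.coe_subtype]; simpa using hcoeff n)
      obtain ⟨q, hq⟩ := (Polynomial.mem_lifts P).1 this
      exact ⟨q, by rw [coe_eval₂RingHom, ← hq, eval_map]⟩
    · rintro ⟨q, rfl⟩
      refine ⟨q.map f, fun n => by simp [coeff_map, hf, Subfield.coe_subtype], ?_⟩
      rw [eval_map, coe_eval₂RingHom]
  have hkS : ∀ a ∈ k, a ∈ S := by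
    intro a ha
    exact ⟨Polynomial.C ⟨a, ha⟩, by simp [hf, Subfield.coe_subtype]⟩
  have hxS : x ∈ S := ⟨Polynomial.X, by simp⟩
  -- inverses of linear factors lie in the closure of S
  have hinvlin : ∀ a ∈ k, (x - a)⁻¹ ∈ closure (S : Set L) := by
    intro a ha
    obtain ⟨a', ha', hlt⟩ := key a ha
    set w := x - a with hwdef
    set s : L := a' - a with hsdef
    have hws : w - s = x - a' := by rw [hwdef, hsdef]; ring
    have hwsn : ‖w - s‖ < ‖w‖ := by rw [hws]; exact hlt
    have hw0 : w ≠ 0 := hxa a ha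
    have hs0 : s ≠ 0 := by
      intro h
      rw [h, sub_zero] at hwsn
      exact lt_irrefl _ hwsn
    have hsk : s ∈ k := k.sub_mem ha' ha
    have hsn : ‖s‖ = ‖w‖ := by
      have h1 : ‖w‖ ≠ ‖-(w - s)‖ := by rw [norm_neg]; exact (ne_of_gt hwsn)
      have := norm_add_eq_max_of_norm_ne_norm h1
      have h2 : w + -(w - s) = s := by ring
      rw [h2, norm_neg] at this
      rw [this, max_eq_left (le_of_lt hwsn)]
    set t : L := (s - w) * s⁻¹ with htdef
    have htn : ‖t‖ < 1 := by
      rw [htdef, norm_mul, norm_inv, hsn, norm_sub_rev]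
      rw [← div_eq_mul_inv]
      exact (div_lt_one (norm_pos_iff.2 hw0)).2 hwsn
    have ht1 : t ≠ 1 := by
      intro h; rw [h, norm_one] at htn; exact lt_irrefl _ htn
    have htS : t ∈ S := S.mul_mem (S.sub_mem (hkS s hsk) (S.sub_mem hxS (hkS a ha)))
      (hkS s⁻¹ (k.inv_mem hsk))
    set psum : ℕ → L := fun n => (∑ j ∈ Finset.range n, t ^ j) * s⁻¹ with hpsum
    have hmem : ∀ n, psum n ∈ S := fun n =>
      S.mul_mem (Subring.sum_mem S (fun j _ => S.pow_mem htS j)) (hkS s⁻¹ (k.inv_mem hsk))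
    have hid : ∀ n, psum n = w⁻¹ - t ^ n * w⁻¹ := by
      intro n
      have ht1' : t - 1 ≠ 0 := sub_ne_zero.2 ht1
      show (∑ j ∈ Finset.range n, t ^ j) * s⁻¹ = w⁻¹ - t ^ n * w⁻¹
      rw [geom_sum_eq ht1]
      have htw : t - 1 = -w * s⁻¹ := by
        rw [htdef]; field_simp; ring
      rw [htw]
      field_simp
      ring
    have hconv : Tendsto psum atTop (nhds w⁻¹) := by
      have h0 : Tendsto (fun n => t ^ n) atTop (nhds 0) :=
        tendsto_pow_atTop_nhds_zero_of_norm_lt_one htn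
      have h1 : Tendsto (fun n => w⁻¹ - t ^ n * w⁻¹) atTop (nhds (w⁻¹ - 0 * w⁻¹)) :=
        Tendsto.sub tendsto_const_nhds (h0.mul_const w⁻¹)
      simp only [zero_mul, sub_zero] at h1
      exact (funext hid : psum = _) ▸ h1
    exact mem_closure_of_tendsto hconv (Filter.Eventually.of_forall hmem)
  -- topological closure of S as a subring
  set T : Subring L := S.topologicalClosure with hT
  have hTcoe : (T : Set L) = closure (S : Set L) := rfl
  -- inverses of nonzero elements of S lie in closure S
  have hinvS : ∀ z ∈ S, z ≠ 0 → z⁻¹ ∈ closure (S : Set L) := by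
    rintro z ⟨q, rfl⟩ hz0
    have hzq : Polynomial.eval₂ f x q ≠ 0 := hz0
    have hfact := (IsAlgClosed.splits q).eq_prod_roots
    set φ := Polynomial.eval₂RingHom f x with hφ
    have hzval : φ q = f q.leadingCoeff * (q.roots.map (fun ρ => x - f ρ)).prod := by
      conv_lhs => rw [hfact]
      rw [map_mul, map_multiset_prod, Multiset.map_map]
      congr 1
      · simp [hφ]
      · congr 1
        apply Multiset.map_congr rfl
        intro ρ _
        simp [hφ]
    have hq0 : q.leadingCoeff ≠ 0 := by
      intro h
      rw [Polynomial.leadingCoeff_eq_zero] at h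
      rw [h] at hzq
      exact hzq (by simp)
    have hlk : (f q.leadingCoeff : L) ∈ k := by
      rw [hf, Subfield.coe_subtype]; exact (q.leadingCoeff : ↥k).2
    have hinv : (φ q)⁻¹ =
        (f q.leadingCoeff)⁻¹ * (q.roots.map (fun ρ => (x - f ρ)⁻¹)).prod := by
      rw [hzval, mul_inv]
      congr 1
      rw [← aux_prod_inv, Multiset.map_map]
      rfl
    show (Polynomial.eval₂ f x q)⁻¹ ∈ closure (S : Set L)
    rw [← hTcoe]
    have : (Polynomial.eval₂ f x q)⁻¹ = (φ q)⁻¹ := rfl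
    rw [this, hinv]
    refine T.mul_mem ?_ ?_
    · exact subset_closure (hkS _ (k.inv_mem hlk))
    · refine Subring.multiset_prod_mem T _ ?_
      intro y hy
      rw [Multiset.mem_map] at hy
      obtain ⟨ρ, hρ, rfl⟩ := hy
      have hρk : (f ρ : L) ∈ k := by rw [hf, Subfield.coe_subtype]; exact ρ.2
      exact hinvlin _ hρk
  -- closure S is closed under inverses of all elements
  have hTinv : ∀ y ∈ closure (S : Set L), y⁻¹ ∈ closure (S : Set L) := by
    intro y hy
    rcases eq_or_ne y 0 with rfl | hy0
    · rw [inv_zero]; exact subset_closure S.zero_mem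
    · have hyn : (0:ℝ) < ‖y‖ := norm_pos_iff.2 hy0
      rw [Metric.mem_closure_iff]
      intro ε hε
      set δ := min ‖y‖ (ε / 2 * (‖y‖ * ‖y‖)) with hδ
      have hδ0 : 0 < δ := lt_min hyn (by positivity)
      obtain ⟨z, hzS, hzd⟩ := Metric.mem_closure_iff.1 hy δ hδ0
      have hzy : ‖y - z‖ < δ := by rwa [dist_eq_norm] at hzd
      have hzy1 : ‖y - z‖ < ‖y‖ := lt_of_lt_of_le hzy (min_le_left _ _)
      have hzy2 : ‖y - z‖ < ε / 2 * (‖y‖ * ‖y‖) := lt_of_lt_of_le hzy (min_le_right _ _)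
      have hnz : ‖z‖ = ‖y‖ := by
        have h1 : ‖y‖ ≠ ‖-(y - z)‖ := by rw [norm_neg]; exact (ne_of_gt hzy1)
        have h2 := norm_add_eq_max_of_norm_ne_norm h1
        have h3 : y + -(y - z) = z := by ring
        rw [h3, norm_neg] at h2
        rw [h2, max_eq_left (le_of_lt hzy1)]
      have hz0 : z ≠ 0 := by
        intro h; rw [h, norm_zero] at hnz; exact hy0 (norm_eq_zero.1 hnz.symm)
      have hdiff : ‖y⁻¹ - z⁻¹‖ < ε / 2 := by
        have heq : y⁻¹ - z⁻¹ = (z - y) * (y⁻¹ * z⁻¹) := by field_simp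
        rw [heq, norm_mul, norm_mul, norm_inv, norm_inv, norm_sub_rev, hnz]
        calc ‖y - z‖ * (‖y‖⁻¹ * ‖y‖⁻¹) < ε / 2 * (‖y‖ * ‖y‖) * (‖y‖⁻¹ * ‖y‖⁻¹) := by
              apply mul_lt_mul_of_pos_right hzy2
              positivity
          _ = ε / 2 := by field_simp
      obtain ⟨b, hbS, hbd⟩ := Metric.mem_closure_iff.1 (hinvS z hzS hz0) (ε/2) (half_pos hε)
      refine ⟨b, hbS, ?_⟩
      calc dist y⁻¹ b ≤ dist y⁻¹ z⁻¹ + dist z⁻¹ b := dist_triangle _ _ _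
        _ < ε / 2 + ε / 2 := by
            apply add_lt_add _ hbd
            rwa [dist_eq_norm]
        _ = ε := add_halves ε
  -- the closure of S is a subfield containing k and x, hence everything
  have hTuniv : closure (S : Set L) = Set.univ := by
    set F : Subfield L := { T with inv_mem' := fun y hy => hTinv y hy } with hF
    have hsub : Subfield.closure ((k : Set L) ∪ {x}) ≤ F := by
      apply (Subfield.closure_le).2
      rintro y (hyk | hyx)
      · exact subset_closure (hkS y hyk)
      · rw [Set.mem_singleton_iff] at hyx
        rw [hyx]
        exact subset_closure hxS
    have h1 : (Subfield.closure ((k : Set L) ∪ {x}) : Set L) ⊆ closure (S : Set L) := hsub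
    have h2 := closure_mono h1
    rw [hgen, closure_closure] at h2
    exact Set.eq_univ_of_univ_subset h2
  have hdense : Dense {y : L | ∃ P : Polynomial L, (∀ n, P.coeff n ∈ k) ∧ y = Polynomial.eval x P} := by
    have : {y : L | ∃ P : Polynomial L, (∀ n, P.coeff n ∈ k) ∧ y = Polynomial.eval x P} = (S : Set L) := by
      ext y; exact hmemPoly y
    rw [this, dense_iff_closure_eq, hTuniv]
  refine ⟨hdense, ?_⟩
  intro π hπ
  have hfρk : ∀ ρ : ↥k, (f ρ : L) ∈ k := fun ρ => by
    rw [hf, Subfield.coe_subtype]; exact ρ.2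
  apply Set.Subset.antisymm
  · -- the unit ball is contained in the closure of the union
    intro y hy
    rw [Metric.mem_closure_iff]
    intro ε hε
    have hmε : 0 < min ε 1 := lt_min hε one_pos
    obtain ⟨z, hzP, hzd⟩ := Metric.mem_closure_iff.1 (hdense y) _ hmε
    have hzS : z ∈ S := (hmemPoly z).1 hzP
    have hyz : ‖y - z‖ < min ε 1 := by rwa [dist_eq_norm] at hzd
    have hz1 : ‖z‖ ≤ 1 := by
      have h1 : y + -(y - z) = z := by ring
      calc ‖z‖ = ‖y + -(y - z)‖ := by rw [h1]
        _ ≤ max ‖y‖ ‖-(y - z)‖ := norm_add_le_max _ _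
        _ ≤ 1 := max_le hy (by
            rw [norm_neg]
            exact le_of_lt (lt_of_lt_of_le hyz (min_le_right _ _)))
    refine ⟨z, ?_, lt_of_lt_of_le hzd (min_le_left _ _)⟩
    -- show z belongs to the union
    obtain ⟨q, hq⟩ := hzS
    rcases eq_or_ne z 0 with rfl | hz0
    · exact Set.mem_biUnion k.zero_mem (Subring.zero_mem _)
    · have hq0 : q ≠ 0 := by
        rintro rfl
        exact hz0 (by simpa using hq.symm)
      have hfact := (IsAlgClosed.splits q).eq_prod_roots
      have hzval : z = f q.leadingCoeff * (q.roots.map (fun ρ => x - f ρ)).prod := by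
        rw [← hq]
        show Polynomial.eval₂RingHom f x q = _
        conv_lhs => rw [hfact]
        rw [map_mul, map_multiset_prod, Multiset.map_map]
        congr 1
        · simp
        · congr 1
          apply Multiset.map_congr rfl
          intro ρ _
          simp
      -- choose a point of k closer to x than all the roots
      have hmulti : ∀ Tm : Multiset L, (∀ ρ ∈ Tm, ρ ∈ k) →
          ∃ a ∈ k, ∀ ρ ∈ Tm, ‖x - a‖ < ‖x - ρ‖ := by
        intro Tm
        induction Tm using Multiset.induction with
        | empty => exact fun _ => ⟨0, k.zero_mem, by simp⟩
        | cons ρ Tm ih =>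
          intro h
          obtain ⟨a1, ha1, hlt1⟩ := ih (fun σ hσ => h σ (Multiset.mem_cons_of_mem hσ))
          by_cases hc : ‖x - a1‖ < ‖x - ρ‖
          · refine ⟨a1, ha1, fun σ hσ => ?_⟩
            rcases Multiset.mem_cons.1 hσ with rfl | h'
            · exact hc
            · exact hlt1 σ h'
          · push_neg at hc
            obtain ⟨a2, ha2, h2⟩ := key ρ (h ρ (Multiset.mem_cons_self ρ Tm))
            refine ⟨a2, ha2, fun σ hσ => ?_⟩
            rcases Multiset.mem_cons.1 hσ with rfl | h'
            · exact h2
            · exact lt_trans (lt_of_lt_of_le h2 hc) (hlt1 σ h')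
      obtain ⟨a, ha, halt⟩ := hmulti (q.roots.map (fun ρ => (f ρ : L))) (by
        intro ρ hρ
        rw [Multiset.mem_map] at hρ
        obtain ⟨σ, _, rfl⟩ := hρ
        exact hfρk σ)
      have halt' : ∀ ρ ∈ q.roots, ‖x - a‖ < ‖x - f ρ‖ := fun ρ hρ =>
        halt _ (Multiset.mem_map_of_mem _ hρ)
      obtain ⟨hπk, hπn⟩ := hπ a ha
      have hπ0 : π a ≠ 0 := by
        intro h
        rw [h, norm_zero] at hπn
        exact (hxa a ha) (norm_eq_zero.1 hπn.symm)
      set u : L := (x - a) / π a with hu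
      have huval : π a * u = x - a := by rw [hu]; field_simp
      have hun : ‖u‖ = 1 := by
        rw [hu, norm_div, hπn]
        exact div_self (ne_of_gt (hxapos a ha))
      have hds : ∀ ρ ∈ q.roots, ‖a - f ρ‖ = ‖x - f ρ‖ := by
        intro ρ hρ
        have h1 : ‖x - f ρ‖ ≠ ‖-(x - a)‖ := by
          rw [norm_neg]; exact (halt' ρ hρ).ne'
        have h2 := norm_add_eq_max_of_norm_ne_norm h1
        have h3 : (x - f ρ) + -(x - a) = a - f ρ := by ring
        rw [h3, norm_neg] at h2
        rw [h2, max_eq_left (le_of_lt (halt' ρ hρ))]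
      have hdne : ∀ ρ ∈ q.roots, (a - f ρ) ≠ 0 := by
        intro ρ hρ h
        have h4 := hds ρ hρ
        rw [h, norm_zero] at h4
        exact (ne_of_gt (hxapos _ (hfρk ρ))) h4.symm
      have hfactor : ∀ ρ ∈ q.roots, x - f ρ = (a - f ρ) * (1 + (π a / (a - f ρ)) * u) := by
        intro ρ hρ
        have hd := hdne ρ hρ
        have h5 : (a - f ρ) * (1 + (π a / (a - f ρ)) * u) = (a - f ρ) + π a * u := by
          field_simp
        rw [h5, huval]
        ring
      have hmapeq : q.roots.map (fun ρ => x - f ρ) =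
          q.roots.map (fun ρ => (a - f ρ) * (1 + (π a / (a - f ρ)) * u)) :=
        Multiset.map_congr rfl hfactor
      set Pr : L := (q.roots.map (fun ρ => 1 + (π a / (a - f ρ)) * u)).prod with hPr
      set Cc : L := f q.leadingCoeff * (q.roots.map (fun ρ => a - f ρ)).prod with hCc
      have hzCP : z = Cc * Pr := by
        rw [hzval, hmapeq, hCc, hPr, Multiset.prod_map_mul]
        ring
      have heρ : ∀ ρ ∈ q.roots, ‖π a / (a - f ρ)‖ < 1 := by
        intro ρ hρ
        rw [norm_div, hπn, hds ρ hρ]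
        exact (div_lt_one (lt_of_le_of_lt (norm_nonneg _) (halt' ρ hρ))).2 (halt' ρ hρ)
      have hPrn : ‖Pr‖ = 1 := by
        rw [hPr]
        apply aux_prod_norm_one
        intro w hw
        rw [Multiset.mem_map] at hw
        obtain ⟨ρ, hρ, rfl⟩ := hw
        have h1 : ‖(1:L)‖ ≠ ‖(π a / (a - f ρ)) * u‖ := by
          rw [norm_one, norm_mul, hun, mul_one]
          exact (heρ ρ hρ).ne'
        have h2 := norm_add_eq_max_of_norm_ne_norm h1
        rw [h2, norm_one, norm_mul, hun, mul_one,
          max_eq_left (le_of_lt (heρ ρ hρ))]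
      have hlk : (f q.leadingCoeff : L) ∈ k := hfρk _
      have hCk : Cc ∈ k := by
        rw [hCc]
        refine k.mul_mem hlk ?_
        refine Subfield.multiset_prod_mem k _ ?_
        intro w hw
        rw [Multiset.mem_map] at hw
        obtain ⟨ρ, hρ, rfl⟩ := hw
        exact k.sub_mem ha (hfρk ρ)
      have hCn : ‖Cc‖ ≤ 1 := by
        have h6 : ‖z‖ = ‖Cc‖ * ‖Pr‖ := by rw [hzCP, norm_mul]
        rw [hPrn, mul_one] at h6
        rw [← h6]
        exact hz1
      have hzmem : z ∈ Subring.closure ({c : L | c ∈ k ∧ ‖c‖ ≤ 1} ∪ {(x - a) / π a}) := by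
        rw [hzCP]
        refine Subring.mul_mem _ (Subring.subset_closure (Or.inl ⟨hCk, hCn⟩)) ?_
        rw [hPr]
        refine Subring.multiset_prod_mem _ _ ?_
        intro w hw
        rw [Multiset.mem_map] at hw
        obtain ⟨ρ, hρ, rfl⟩ := hw
        refine Subring.add_mem _ (Subring.one_mem _) (Subring.mul_mem _ ?_ ?_)
        · exact Subring.subset_closure
            (Or.inl ⟨k.div_mem hπk (k.sub_mem ha (hfρk ρ)), le_of_lt (heρ ρ hρ)⟩)
        · exact Subring.subset_closure
            (Set.mem_union_right _ (Set.mem_singleton_iff.2 hu))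
      exact Set.mem_biUnion ha hzmem
  · -- the closure of the union is contained in the unit ball
    apply closure_minimal
    · apply Set.iUnion₂_subset
      intro a ha
      intro w hw
      have hπa := hπ a ha
      have hπ0 : π a ≠ 0 := by
        intro h
        rw [h, norm_zero] at hπa
        exact (hxa a ha) (norm_eq_zero.1 hπa.2.symm)
      have : w ∈ Subring.closure ({c : L | c ∈ k ∧ ‖c‖ ≤ 1} ∪ {(x - a) / π a}) := hw
      refine Subring.closure_induction ?_ ?_ ?_ ?_ ?_ ?_ this
      · rintro c (⟨_, hc⟩ | hc)
        · exact hc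
        · rw [Set.mem_singleton_iff] at hc
          subst hc
          show ‖(x - a) / π a‖ ≤ 1
          rw [norm_div, hπa.2]
          rw [div_self (ne_of_gt (hxapos a ha))]
      · show ‖(0:L)‖ ≤ 1
        simp
      · show ‖(1:L)‖ ≤ 1
        simp
      · intro c d _ _ hc hd
        exact le_trans (norm_add_le_max c d) (max_le hc hd)
      · intro c _ hc
        show ‖-c‖ ≤ 1
        rwa [norm_neg]
      · intro c d _ _ hc hd
        show ‖c * d‖ ≤ 1
        rw [norm_mul]
        calc ‖c‖ * ‖d‖ ≤ 1 * 1 := mul_le_mul hc hd (norm_nonneg _) zero_le_one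
          _ = 1 := mul_one 1
    · exact isClosed_le continuous_norm continuous_const
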